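/- Let A = {a_s + n_s ℤ}_{s=1}^k be a finite system of residue classes and let m_1,…,m_k be integers with gcd(m_s, n_s) = 1 for each s. Let S = { {∑_{s∈I} m_s/n_s} : I ⊆ {1,…,k} } be the set of fractional parts of subset sums. If A covers |S| consecutive integers (each at least once), then A covers every integer. -/

import Mathlib

open Finset

noncomputable def EE (q : ℚ) : ℂ := Complex.exp (2 * Real.pi * Complex.I * q)

lemma EE_add (p q : ℚ) : EE (p + q) = EE p * EE q := by
  rw [EE, EE, EE, ← Complex.exp_add]
  push_cast
  ring_nf

lemma EE_ne_zero (q : ℚ) : EE q ≠ 0 := Complex.exp_ne_zero _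

lemma EE_int (z : ℤ) : EE z = 1 := by
  rw [EE, Complex.exp_eq_one_iff]
  exact ⟨z, by push_cast; ring⟩

lemma EE_eq_one_iff (q : ℚ) : EE q = 1 ↔ ∃ z : ℤ, q = z := by
  rw [EE, Complex.exp_eq_one_iff]
  constructor
  · rintro ⟨z, hz⟩
    refine ⟨z, ?_⟩
    have h2 : (2 * (Real.pi : ℂ) * Complex.I) ≠ 0 := by
      simp [Real.pi_ne_zero, Complex.I_ne_zero]
    have hq : (q : ℂ) = z := by
      apply mul_left_cancel₀ h2
      rw [hz]; ring
    exact_mod_cast hq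
  · rintro ⟨z, rfl⟩
    exact ⟨z, by push_cast; ring⟩

lemma EE_add_int (p : ℚ) (z : ℤ) : EE (p + z) = EE p := by
  rw [EE_add, EE_int, mul_one]

lemma EE_zpow (q : ℚ) (x : ℤ) : EE (x * q) = EE q ^ x := by
  rw [EE, EE, ← Complex.exp_int_mul]
  push_cast
  ring_nf

lemma EE_sum {α : Type*} (I : Finset α) (q : α → ℚ) :
    EE (∑ s ∈ I, q s) = ∏ s ∈ I, EE (q s) := by
  rw [EE, show ((2 : ℂ) * Real.pi * Complex.I * ((∑ s ∈ I, q s : ℚ) : ℂ))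
      = ∑ s ∈ I, 2 * Real.pi * Complex.I * (q s : ℂ) by push_cast; rw [Finset.mul_sum],
    Complex.exp_sum]
  rfl

lemma EE_inj {p q : ℚ} (hp0 : 0 ≤ p) (hp1 : p < 1) (hq0 : 0 ≤ q) (hq1 : q < 1)
    (h : EE p = EE q) : p = q := by
  have h1 : EE (p - q) * EE q = EE q := by
    rw [← EE_add, sub_add_cancel, h]
  have h2 : EE (p - q) = 1 := by
    have := mul_right_cancel₀ (EE_ne_zero q) (h1.trans (one_mul (EE q)).symm)
    exact this
  obtain ⟨z, hz⟩ := (EE_eq_one_iff _).mp h2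
  have hb1 : (z : ℚ) < 1 := by rw [← hz]; linarith
  have hb2 : (-1 : ℚ) < z := by rw [← hz]; linarith
  have : z = 0 := by
    have h1' : z < 1 := by exact_mod_cast hb1
    have h2' : (-1 : ℤ) < z := by exact_mod_cast hb2
    omega
  rw [this] at hz
  simpa using sub_eq_zero.mp (by exact_mod_cast hz)

theorem stmt_4 (k : ℕ) (a : Fin k → ℤ) (n : Fin k → ℕ) (hn : ∀ s, 0 < n s)
    (m : Fin k → ℤ) (hcop : ∀ s, IsCoprime (m s) (n s : ℤ))
    (S : Finset ℚ)
    (hS : S = Finset.univ.powerset.image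
      (fun I : Finset (Fin k) => Int.fract (∑ s ∈ I, (m s : ℚ) / n s)))
    (x0 : ℤ)
    (hcons : ∀ j : ℕ, j < S.card → ∃ s : Fin k, (n s : ℤ) ∣ (x0 + j) - a s) :
    ∀ x : ℤ, ∃ s : Fin k, (n s : ℤ) ∣ x - a s := by
  classical
  set f : Finset (Fin k) → ℚ := fun I => Int.fract (∑ s ∈ I, (m s : ℚ) / n s) with hf
  set g : ℤ → ℂ := fun x => ∏ s : Fin k, (1 - EE ((m s * (x - a s) : ℤ) / (n s : ℚ))) with hg
  have hnQ : ∀ s, ((n s : ℚ)) ≠ 0 := fun s => by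
    exact_mod_cast (hn s).ne'
  -- Step 1 : g x = 0 ↔ covered
  have step1 : ∀ x : ℤ, (g x = 0 ↔ ∃ s : Fin k, (n s : ℤ) ∣ x - a s) := by
    intro x
    rw [hg]
    simp only [Finset.prod_eq_zero_iff, Finset.mem_univ, true_and]
    apply exists_congr; intro s
    rw [sub_eq_zero, eq_comm, EE_eq_one_iff]
    constructor
    · rintro ⟨z, hz⟩
      rw [div_eq_iff (hnQ s)] at hz
      have hz' : m s * (x - a s) = z * n s := by exact_mod_cast hz
      have hdvd : (n s : ℤ) ∣ m s * (x - a s) := ⟨z, by linarith [hz']⟩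
      exact ((hcop s).symm).dvd_of_dvd_mul_left hdvd
    · rintro ⟨c, hc⟩
      refine ⟨m s * c, ?_⟩
      rw [div_eq_iff (hnQ s), hc]
      push_cast; ring
  -- coefficients
  set d : Finset (Fin k) → ℂ :=
    fun I => (-1) ^ I.card * EE (-(∑ s ∈ I, (m s * a s : ℤ) / (n s : ℚ))) with hd
  set b : ℚ → ℂ :=
    fun θ => ∑ I ∈ (Finset.univ : Finset (Fin k)).powerset.filter (fun I => f I = θ), d I with hb
  -- Step 2 : expansion
  have step2 : ∀ x : ℤ, g x = ∑ θ ∈ S, b θ * EE θ ^ x := by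
    intro x
    have expand : g x = ∑ I ∈ (Finset.univ : Finset (Fin k)).powerset,
        d I * EE (f I) ^ x := by
      simp only [hg]
      have h1 : ∀ s : Fin k, (1 : ℂ) - EE ((m s * (x - a s) : ℤ) / (n s : ℚ))
          = (fun s => -EE ((m s * (x - a s) : ℤ) / (n s : ℚ))) s + (fun _ => (1:ℂ)) s := by
        intro s; simp; ring
      rw [Finset.prod_congr rfl (fun s _ => h1 s), Finset.prod_add]
      apply Finset.sum_congr rfl
      intro I _
      rw [Finset.prod_const_one, mul_one]
      have h2 : ∏ s ∈ I, (-EE ((m s * (x - a s) : ℤ) / (n s : ℚ)))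
          = (-1) ^ I.card * ∏ s ∈ I, EE ((m s * (x - a s) : ℤ) / (n s : ℚ)) := by
        rw [← Finset.prod_const (-1 : ℂ), ← Finset.prod_mul_distrib]
        apply Finset.prod_congr rfl; intro s _; ring
      rw [h2, ← EE_sum]
      have key : EE (∑ s ∈ I, ((m s * (x - a s) : ℤ) / (n s : ℚ)))
          = EE (-(∑ s ∈ I, (m s * a s : ℤ) / (n s : ℚ))) * EE (f I) ^ x := by
        have split : (∑ s ∈ I, ((m s * (x - a s) : ℤ) / (n s : ℚ)))
            = (-(∑ s ∈ I, (m s * a s : ℤ) / (n s : ℚ)))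
              + (x : ℚ) * (∑ s ∈ I, (m s : ℚ) / n s) := by
          rw [Finset.mul_sum, ← Finset.sum_neg_distrib, ← Finset.sum_add_distrib]
          apply Finset.sum_congr rfl
          intro s _
          field_simp
          push_cast
          ring
        rw [split, EE_add]
        congr 1
        have frac : (x : ℚ) * (∑ s ∈ I, (m s : ℚ) / n s)
            = (x : ℚ) * f I + (x * ⌊∑ s ∈ I, (m s : ℚ) / n s⌋ : ℤ) := by
          rw [hf]
          simp only [Int.fract]
          push_cast
          ring
        rw [frac, EE_add_int, EE_zpow]
      rw [key, hd]
      ring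
    rw [expand, ← Finset.sum_fiberwise_of_maps_to (g := f)
        (t := S) (fun I hI => by rw [hS]; exact Finset.mem_image_of_mem _ hI)]
    apply Finset.sum_congr rfl
    intro θ _
    rw [hb, Finset.sum_mul]
    apply Finset.sum_congr rfl
    intro I hI
    rw [Finset.mem_filter] at hI
    rw [hI.2]
  -- membership in S gives bounds
  have hSbound : ∀ θ ∈ S, 0 ≤ θ ∧ θ < 1 := by
    intro θ hθ
    rw [hS, Finset.mem_image] at hθ
    obtain ⟨I, _, rfl⟩ := hθ
    exact ⟨Int.fract_nonneg _, Int.fract_lt_one _⟩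
  -- Step 3 : all coefficients vanish
  set t := S.card with ht
  set e := S.equivFin with he
  set F : Fin t → ℚ := fun i => (e.symm i : ℚ) with hF
  have hFS : ∀ i, F i ∈ S := fun i => (e.symm i).2
  have hFinj : Function.Injective (fun i => EE (F i)) := by
    intro i j hij
    have h1 := hSbound _ (hFS i)
    have h2 := hSbound _ (hFS j)
    have : F i = F j := EE_inj h1.1 h1.2 h2.1 h2.2 hij
    have : e.symm i = e.symm j := Subtype.ext this
    exact e.symm.injective this
  have sum_eq : ∀ (h : ℚ → ℂ), ∑ θ ∈ S, h θ = ∑ i : Fin t, h (F i) := by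
    intro h
    rw [← Finset.sum_coe_sort S h]
    exact (Equiv.sum_comp e.symm (fun θ : S => h θ)).symm
  set v : Fin t → ℂ := fun i => b (F i) * EE (F i) ^ x0 with hv
  have hvzero : v = 0 := by
    apply Matrix.eq_zero_of_forall_pow_sum_mul_pow_eq_zero hFinj
    intro j
    have hzero : g (x0 + (j : ℕ)) = 0 := (step1 _).mpr (hcons j j.2)
    rw [step2, sum_eq] at hzero
    rw [← hzero]
    apply Finset.sum_congr rfl
    intro i _
    rw [hv]
    have : EE (F i) ^ (x0 + (j : ℕ)) = EE (F i) ^ x0 * EE (F i) ^ (j : ℕ) := by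
      rw [zpow_add₀ (EE_ne_zero _), zpow_natCast]
    rw [this]
    ring
  have hbzero : ∀ θ ∈ S, b θ = 0 := by
    intro θ hθ
    set i := e ⟨θ, hθ⟩ with hi
    have hFi : F i = θ := by simp only [hF, hi, Equiv.symm_apply_apply]
    have := congrFun hvzero i
    rw [hv] at this
    simp only [Pi.zero_apply] at this
    have hne : EE (F i) ^ x0 ≠ 0 := zpow_ne_zero _ (EE_ne_zero _)
    have := (mul_eq_zero.mp this).resolve_right hne
    rwa [hFi] at this
  intro x
  rw [← step1 x, step2]
  apply Finset.sum_eq_zero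
  intro θ hθ
  rw [hbzero θ hθ, zero_mul]
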